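/- Every cycle of odd length does not admit a locally irregular edge coloring. -/

import Mathlib

/-- The number of edges of color `c` incident to vertex `v` under edge coloring `φ`
(the `c`-degree of `v`). -/
noncomputable def colorDeg {V α : Type*} (G : SimpleGraph V)
    (φ : Sym2 V → α) (c : α) (v : V) : ℕ :=
  Nat.card {w : V // G.Adj v w ∧ φ s(v, w) = c}

/-- An edge coloring of `G` is locally irregular if within every color class the
endpoints of each edge have distinct degrees (isolated vertices are irrelevant). -/
def IsLocIrrColoring {V α : Type*} (G : SimpleGraph V) (φ : Sym2 V → α) : Prop :=
  ∀ ⦃v w : V⦄, G.Adj v w →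
    colorDeg G φ (φ s(v, w)) v ≠ colorDeg G φ (φ s(v, w)) w

open Fin.NatCast in
open Classical in
/-- In the cycle `C_{m+3}`, the `c`-degree of `v` is determined by the colors of the
two edges at `v`. -/
lemma colorDeg_cycle (m : ℕ) (α : Type) (φ : Sym2 (Fin (m+3)) → α) (c : α)
    (v : Fin (m+3)) :
    colorDeg (SimpleGraph.cycleGraph (m+3)) φ c v =
      (if φ s(v, v-1) = c then 1 else 0) + (if φ s(v, v+1) = c then 1 else 0) := by
  classical
  have h20 : (2 : Fin (m+3)) ≠ 0 := by
    simp only [ne_eq, Fin.ext_iff, Fin.val_zero]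
    have : ((2 : Fin (m+3)) : ℕ) = 2 % (m+3) := rfl
    rw [this, Nat.mod_eq_of_lt (by omega)]
    omega
  have hne : (v - 1 : Fin (m+3)) ≠ v + 1 := by
    intro h
    apply h20
    have h1 : v - 1 + 1 = v + 1 + 1 := by rw [h]
    rw [sub_add_cancel] at h1
    rw [add_assoc, one_add_one_eq_two] at h1
    exact (left_eq_add.mp h1)
  have hadj : ∀ w : Fin (m+3),
      (SimpleGraph.cycleGraph (m+3)).Adj v w ↔ (w = v - 1 ∨ w = v + 1) := by
    intro w
    have h := Set.ext_iff.mp (SimpleGraph.cycleGraph_neighborSet (n := m+1) (v := v)) w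
    simpa [SimpleGraph.mem_neighborSet] using h
  have hset : colorDeg (SimpleGraph.cycleGraph (m+3)) φ c v =
      Set.ncard {w : Fin (m+3) | (w = v - 1 ∨ w = v + 1) ∧ φ s(v, w) = c} := by
    rw [colorDeg]
    rw [show (Nat.card {w : Fin (m+3) // (SimpleGraph.cycleGraph (m+3)).Adj v w ∧ φ s(v, w) = c})
        = Nat.card {w : Fin (m+3) // (w = v - 1 ∨ w = v + 1) ∧ φ s(v, w) = c} from
      Nat.card_congr (Equiv.subtypeEquivRight fun w => and_congr_left' (hadj w))]
    exact (Nat.card_coe_set_eq _)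
  rw [hset]
  by_cases hp : φ s(v, v-1) = c <;> by_cases hq : φ s(v, v+1) = c
  · rw [if_pos hp, if_pos hq]
    rw [show {w : Fin (m+3) | (w = v - 1 ∨ w = v + 1) ∧ φ s(v, w) = c} = {v-1, v+1} by
      ext w
      constructor
      · rintro ⟨h | h, _⟩ <;> simp [h]
      · rintro (h | h) <;> subst h
        · exact ⟨Or.inl rfl, hp⟩
        · exact ⟨Or.inr rfl, hq⟩]
    rw [Set.ncard_pair hne]
  · rw [if_pos hp, if_neg hq]
    rw [show {w : Fin (m+3) | (w = v - 1 ∨ w = v + 1) ∧ φ s(v, w) = c} = {v-1} by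
      ext w
      constructor
      · rintro ⟨h | h, hc⟩
        · simp [h]
        · subst h; exact absurd hc hq
      · rintro h
        rw [Set.mem_singleton_iff] at h
        subst h; exact ⟨Or.inl rfl, hp⟩]
    rw [Set.ncard_singleton]
  · rw [if_neg hp, if_pos hq]
    rw [show {w : Fin (m+3) | (w = v - 1 ∨ w = v + 1) ∧ φ s(v, w) = c} = {v+1} by
      ext w
      constructor
      · rintro ⟨h | h, hc⟩
        · subst h; exact absurd hc hp
        · simp [h]
      · rintro h
        rw [Set.mem_singleton_iff] at h
        subst h; exact ⟨Or.inr rfl, hq⟩]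
    rw [Set.ncard_singleton]
  · rw [if_neg hp, if_neg hq]
    rw [show {w : Fin (m+3) | (w = v - 1 ∨ w = v + 1) ∧ φ s(v, w) = c} = ∅ by
      ext w
      simp only [Set.mem_setOf_eq, Set.mem_empty_iff_false, iff_false]
      rintro ⟨h | h, hc⟩
      · subst h; exact hp hc
      · subst h; exact hq hc]
    rw [Set.ncard_empty]

open Fin.NatCast Fin.CommRing in
/-- Every cycle of odd length does not admit a locally irregular edge coloring. -/
theorem odd_cycle_not_colorable (n : ℕ) (hn : Odd n) (h3 : 3 ≤ n) :
    ∀ (α : Type) (φ : Sym2 (Fin n) → α),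
      ¬ IsLocIrrColoring (SimpleGraph.cycleGraph n) φ := by
  classical
  obtain ⟨m, rfl⟩ : ∃ m, n = m + 3 := ⟨n - 3, by omega⟩
  intro α φ hφ
  set f : Fin (m+3) → α := fun v => φ s(v, v+1) with hf
  set b : Fin (m+3) → Bool := fun v => decide (f v = f (v+1)) with hb
  -- consecutive vertices are adjacent
  have hadj : ∀ v : Fin (m+3), (SimpleGraph.cycleGraph (m+3)).Adj v (v+1) := by
    intro v
    exact (SimpleGraph.cycleGraph_adj (n := m+1)).mpr (Or.inr (by rw [add_sub_cancel_left]))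
  -- the alternation at every edge
  have hxor : ∀ u : Fin (m+3), ((f (u-1) = f u) ↔ ¬ (f (u+1) = f u)) := by
    intro u
    have h := hφ (hadj u)
    rw [colorDeg_cycle, colorDeg_cycle] at h
    have e1 : φ s(u, u-1) = f (u-1) := by
      show _ = φ s(u-1, u-1+1)
      rw [sub_add_cancel, Sym2.eq_swap]
    have e2 : φ s(u+1, u+1-1) = f u := by
      rw [add_sub_cancel_right]
      show _ = φ s(u, u+1)
      rw [Sym2.eq_swap]
    have e3 : φ s(u+1, u+1+1) = f (u+1) := rfl
    rw [e1, e2, e3] at h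
    rw [if_pos rfl] at h
    by_cases h1 : f (u-1) = f u <;> by_cases h2 : f (u+1) = f u <;>
      simp only [h1, h2, if_pos, if_neg, not_false_iff, not_true] at h ⊢ <;> simp_all [f]
  have hstep : ∀ v : Fin (m+3), b (v + 1) = ! b v := by
    intro v
    have h := hxor (v+1)
    rw [add_sub_cancel_right] at h
    by_cases hc : f v = f (v+1)
    · have h2 : ¬ (f (v+1) = f (v+1+1)) := fun he => (h.mp hc) he.symm
      simp [hb, hc, h2]
    · have h2 : f (v+1+1) = f (v+1) := by
        by_contra hB
        exact hc (h.mpr hB)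
      simp only [hb]
      rw [decide_eq_true h2.symm, decide_eq_false hc]
      rfl
  have key : ∀ k : ℕ, b ((k : Fin (m+3))) = xor (b 0) (decide (Odd k)) := by
    intro k
    induction k with
    | zero => simp
    | succ k ih =>
      have hc : ((k+1 : ℕ) : Fin (m+3)) = ((k : ℕ) : Fin (m+3)) + 1 := by push_cast; ring
      rw [hc, hstep, ih]
      cases hbo : b 0 <;> by_cases hk : Odd k <;>
        simp [hk, Nat.odd_add_one]
  have hfin := key (m+3)
  rw [Fin.natCast_self] at hfin
  rw [decide_eq_true hn] at hfin
  cases hbo : b 0 <;> rw [hbo] at hfin <;> simp at hfin
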